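/- Define the matching relation on a word over a visibly pushdown alphabet via a stack semantics: process the word left to right, pushing each call position onto a stack and, on each return position, popping the top call position (if any) and declaring the pair matched. Then this relation satisfies the three axioms of a matching relation: (i) matched pairs (i,j) satisfy i < j; (ii) for any call position i and return position j with i < j, some l with i ≤ l ≤ j satisfies i ~ l or l ~ j; (iii) every position participates in at most one matched pair. -/

import Mathlib

inductive SymKind : Type
  | call | ret | intern
deriving DecidableEq

def CallPos {σ : Type*} (kind : σ → SymKind) (w : List σ) (i : ℕ) : Prop :=
  ∃ a, w[i]? = some a ∧ kind a = SymKind.call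

def RetPos {σ : Type*} (kind : σ → SymKind) (w : List σ) (j : ℕ) : Prop :=
  ∃ a, w[j]? = some a ∧ kind a = SymKind.ret

/-- Left-to-right scan computing the matched call–return pairs: `i` is the
position of the first letter of the remaining word, `st` is the stack of
pending call positions. -/
def mpairs {σ : Type*} (kind : σ → SymKind) :
    List σ → ℕ → List ℕ → List (ℕ × ℕ)
  | [], _, _ => []
  | a :: rest, i, st =>
    match kind a with
    | SymKind.call => mpairs kind rest (i + 1) (i :: st)
    | SymKind.ret =>
      match st with
      | [] => mpairs kind rest (i + 1) []
      | c :: st' => (c, i) :: mpairs kind rest (i + 1) st'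
    | SymKind.intern => mpairs kind rest (i + 1) st

/-- The stack-semantics matching relation on the positions of `w`. -/
def StackMatch {σ : Type*} (kind : σ → SymKind) (w : List σ) (i j : ℕ) : Prop :=
  (i, j) ∈ mpairs kind w 0 []

lemma getElem?_shift {σ : Type*} (a : σ) (rest : List σ) {k i : ℕ} (h : i + 1 ≤ k) :
    (a :: rest)[k - i]? = rest[k - (i + 1)]? := by
  have e : k - i = (k - (i + 1)) + 1 := by omega
  rw [e, List.getElem?_cons_succ]

lemma mpairs_bounds {σ : Type*} (kind : σ → SymKind) (w : List σ) :
    ∀ (i : ℕ) (st : List ℕ), (∀ x ∈ st, x < i) → ∀ p ∈ mpairs kind w i st,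
      (p.1 ∈ st ∨ (i ≤ p.1 ∧ ∃ a, w[p.1 - i]? = some a ∧ kind a = SymKind.call)) ∧
      p.1 < p.2 ∧ i ≤ p.2 ∧ (∃ a, w[p.2 - i]? = some a ∧ kind a = SymKind.ret) := by
  induction w with
  | nil => intro i st _ p hp; simp [mpairs] at hp
  | cons a rest ih =>
    intro i st hst p hp
    cases hk : kind a with
    | call =>
      simp only [mpairs, hk] at hp
      have hst' : ∀ x ∈ i :: st, x < i + 1 := by
        intro x hx
        rcases List.mem_cons.mp hx with h | h
        · omega
        · exact Nat.lt_succ_of_lt (hst x h)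
      obtain ⟨h1, h2, h3, b, hb, hbk⟩ := ih (i + 1) (i :: st) hst' p hp
      refine ⟨?_, h2, by omega, b, ?_, hbk⟩
      · rcases h1 with h | ⟨h, c, hc, hck⟩
        · rcases List.mem_cons.mp h with h | h
          · right
            refine ⟨le_of_eq h.symm, a, ?_, hk⟩
            rw [h, Nat.sub_self, List.getElem?_cons_zero]
          · left; exact h
        · right
          refine ⟨by omega, c, ?_, hck⟩
          rw [getElem?_shift a rest h]; exact hc
      · rw [getElem?_shift a rest h3]; exact hb
    | intern =>
      simp only [mpairs, hk] at hp
      have hst' : ∀ x ∈ st, x < i + 1 := fun x hx => Nat.lt_succ_of_lt (hst x hx)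
      obtain ⟨h1, h2, h3, b, hb, hbk⟩ := ih (i + 1) st hst' p hp
      refine ⟨?_, h2, by omega, b, ?_, hbk⟩
      · rcases h1 with h | ⟨h, c, hc, hck⟩
        · left; exact h
        · right
          refine ⟨by omega, c, ?_, hck⟩
          rw [getElem?_shift a rest h]; exact hc
      · rw [getElem?_shift a rest h3]; exact hb
    | ret =>
      cases st with
      | nil =>
        simp only [mpairs, hk] at hp
        obtain ⟨h1, h2, h3, b, hb, hbk⟩ := ih (i + 1) [] (by simp) p hp
        rcases h1 with h | ⟨h, c, hc, hck⟩
        · simp at h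
        refine ⟨Or.inr ⟨by omega, c, ?_, hck⟩, h2, by omega, b, ?_, hbk⟩
        · rw [getElem?_shift a rest h]; exact hc
        · rw [getElem?_shift a rest h3]; exact hb
      | cons d st' =>
        simp only [mpairs, hk] at hp
        rcases List.mem_cons.mp hp with h | h
        · subst h
          refine ⟨Or.inl (by simp), hst d (by simp), le_refl i, a, ?_, hk⟩
          simp
        · have hst' : ∀ x ∈ st', x < i + 1 :=
            fun x hx => Nat.lt_succ_of_lt (hst x (List.mem_cons_of_mem _ hx))
          obtain ⟨h1, h2, h3, b, hb, hbk⟩ := ih (i + 1) st' hst' p h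
          refine ⟨?_, h2, by omega, b, ?_, hbk⟩
          · rcases h1 with h | ⟨h, c, hc, hck⟩
            · left; exact List.mem_cons_of_mem _ h
            · right
              refine ⟨by omega, c, ?_, hck⟩
              rw [getElem?_shift a rest h]; exact hc
          · rw [getElem?_shift a rest h3]; exact hb

lemma mpairs_pop {σ : Type*} (kind : σ → SymKind) (w : List σ) :
    ∀ (i : ℕ) (st : List ℕ) (c n : ℕ),
      (∀ x ∈ st, x < i) → List.Pairwise (· > ·) st → c ∈ st →
      (∃ a, w[n]? = some a ∧ kind a = SymKind.ret) →
      ∃ l, l ≤ i + n ∧ ((c, l) ∈ mpairs kind w i st ∨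
        (c ≤ l ∧ (l, i + n) ∈ mpairs kind w i st)) := by
  induction w with
  | nil => intro i st c n _ _ _ h; obtain ⟨a, ha, _⟩ := h; simp at ha
  | cons a rest ih =>
    intro i st c n hlt hsort hc hret
    obtain ⟨b, hb, hbk⟩ := hret
    cases n with
    | zero =>
      rw [List.getElem?_cons_zero] at hb
      have hab : a = b := by injection hb
      subst hab
      obtain ⟨d, st', rfl⟩ : ∃ d st', st = d :: st' := by
        cases st with
        | nil => simp at hc
        | cons d st' => exact ⟨d, st', rfl⟩
      refine ⟨d, by have := hlt d (by simp); omega, Or.inr ⟨?_, ?_⟩⟩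
      · rcases List.mem_cons.mp hc with h | h
        · omega
        · have := (List.pairwise_cons.mp hsort).1 c h
          omega
      · simp only [mpairs, hbk]
        simp
    | succ n' =>
      rw [List.getElem?_cons_succ] at hb
      have e : i + (n' + 1) = (i + 1) + n' := by omega
      cases hk : kind a with
      | call =>
        have hlt' : ∀ x ∈ i :: st, x < i + 1 := by
          intro x hx
          rcases List.mem_cons.mp hx with h | h
          · omega
          · exact Nat.lt_succ_of_lt (hlt x h)
        have hsort' : List.Pairwise (· > ·) (i :: st) :=
          List.pairwise_cons.mpr ⟨fun x hx => hlt x hx, hsort⟩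
        obtain ⟨l, hl, h⟩ := ih (i + 1) (i :: st) c n' hlt' hsort'
          (List.mem_cons_of_mem _ hc) ⟨b, hb, hbk⟩
        refine ⟨l, by omega, ?_⟩
        rw [e]
        simpa only [mpairs, hk] using h
      | intern =>
        have hlt' : ∀ x ∈ st, x < i + 1 := fun x hx => Nat.lt_succ_of_lt (hlt x hx)
        obtain ⟨l, hl, h⟩ := ih (i + 1) st c n' hlt' hsort hc ⟨b, hb, hbk⟩
        refine ⟨l, by omega, ?_⟩
        rw [e]
        simpa only [mpairs, hk] using h
      | ret =>
        obtain ⟨d, st', rfl⟩ : ∃ d st', st = d :: st' := by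
          cases st with
          | nil => simp at hc
          | cons d st' => exact ⟨d, st', rfl⟩
        rcases List.mem_cons.mp hc with h | h
        · subst h
          refine ⟨i, by omega, Or.inl ?_⟩
          simp only [mpairs, hk]
          simp
        · have hlt' : ∀ x ∈ st', x < i + 1 :=
            fun x hx => Nat.lt_succ_of_lt (hlt x (List.mem_cons_of_mem _ hx))
          obtain ⟨l, hl, h⟩ := ih (i + 1) st' c n' hlt'
            (List.pairwise_cons.mp hsort).2 h ⟨b, hb, hbk⟩
          refine ⟨l, by omega, ?_⟩
          rw [e]
          simp only [mpairs, hk]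
          rcases h with h | ⟨h1, h2⟩
          · exact Or.inl (List.mem_cons_of_mem _ h)
          · exact Or.inr ⟨h1, List.mem_cons_of_mem _ h2⟩

lemma mpairs_between {σ : Type*} (kind : σ → SymKind) (w : List σ) :
    ∀ (i : ℕ) (st : List ℕ) (k j : ℕ),
      (∀ x ∈ st, x < i) → List.Pairwise (· > ·) st → i ≤ k → k < j →
      (∃ a, w[k - i]? = some a ∧ kind a = SymKind.call) →
      (∃ a, w[j - i]? = some a ∧ kind a = SymKind.ret) →
      ∃ l, k ≤ l ∧ l ≤ j ∧ ((k, l) ∈ mpairs kind w i st ∨ (l, j) ∈ mpairs kind w i st) := by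
  induction w with
  | nil => intro i st k j _ _ _ _ h _; obtain ⟨a, ha, _⟩ := h; simp at ha
  | cons a rest ih =>
    intro i st k j hlt hsort hik hkj hcall hret
    obtain ⟨b, hb, hbk⟩ := hcall
    obtain ⟨b', hb', hbk'⟩ := hret
    rw [getElem?_shift a rest (by omega : i + 1 ≤ j)] at hb'
    by_cases hk0 : k = i
    · subst hk0
      rw [Nat.sub_self, List.getElem?_cons_zero] at hb
      have hab : a = b := by injection hb
      have hka : kind a = SymKind.call := by rw [hab]; exact hbk
      have hlt' : ∀ x ∈ k :: st, x < k + 1 := by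
        intro x hx
        rcases List.mem_cons.mp hx with h | h
        · omega
        · exact Nat.lt_succ_of_lt (hlt x h)
      have hsort' : List.Pairwise (· > ·) (k :: st) :=
        List.pairwise_cons.mpr ⟨fun x hx => hlt x hx, hsort⟩
      obtain ⟨l, hl, h⟩ := mpairs_pop kind rest (k + 1) (k :: st) k (j - (k + 1))
        hlt' hsort' (by simp) ⟨b', hb', hbk'⟩
      have ej : (k + 1) + (j - (k + 1)) = j := by omega
      rw [ej] at hl h
      rcases h with h | ⟨h1, h2⟩
      · have := (mpairs_bounds kind rest (k + 1) (k :: st) hlt' (k, l) h).2.1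
        refine ⟨l, by omega, hl, Or.inl ?_⟩
        simpa only [mpairs, hka] using h
      · refine ⟨l, h1, hl, Or.inr ?_⟩
        simpa only [mpairs, hka] using h2
    · have hik' : i + 1 ≤ k := by omega
      rw [getElem?_shift a rest hik'] at hb
      cases hka : kind a with
      | call =>
        have hlt' : ∀ x ∈ i :: st, x < i + 1 := by
          intro x hx
          rcases List.mem_cons.mp hx with h | h
          · omega
          · exact Nat.lt_succ_of_lt (hlt x h)
        have hsort' : List.Pairwise (· > ·) (i :: st) :=
          List.pairwise_cons.mpr ⟨fun x hx => hlt x hx, hsort⟩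
        obtain ⟨l, h1, h2, h⟩ := ih (i + 1) (i :: st) k j hlt' hsort' hik' hkj
          ⟨b, hb, hbk⟩ ⟨b', hb', hbk'⟩
        exact ⟨l, h1, h2, by simpa only [mpairs, hka] using h⟩
      | intern =>
        have hlt' : ∀ x ∈ st, x < i + 1 := fun x hx => Nat.lt_succ_of_lt (hlt x hx)
        obtain ⟨l, h1, h2, h⟩ := ih (i + 1) st k j hlt' hsort hik' hkj
          ⟨b, hb, hbk⟩ ⟨b', hb', hbk'⟩
        exact ⟨l, h1, h2, by simpa only [mpairs, hka] using h⟩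
      | ret =>
        cases st with
        | nil =>
          obtain ⟨l, h1, h2, h⟩ := ih (i + 1) [] k j (by simp) (by simp) hik' hkj
            ⟨b, hb, hbk⟩ ⟨b', hb', hbk'⟩
          exact ⟨l, h1, h2, by simpa only [mpairs, hka] using h⟩
        | cons d st' =>
          have hlt' : ∀ x ∈ st', x < i + 1 :=
            fun x hx => Nat.lt_succ_of_lt (hlt x (List.mem_cons_of_mem _ hx))
          obtain ⟨l, h1, h2, h⟩ := ih (i + 1) st' k j hlt'
            (List.pairwise_cons.mp hsort).2 hik' hkj ⟨b, hb, hbk⟩ ⟨b', hb', hbk'⟩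
          refine ⟨l, h1, h2, ?_⟩
          simp only [mpairs, hka]
          rcases h with h | h
          · exact Or.inl (List.mem_cons_of_mem _ h)
          · exact Or.inr (List.mem_cons_of_mem _ h)

lemma mpairs_unique {σ : Type*} (kind : σ → SymKind) (w : List σ) :
    ∀ (i : ℕ) (st : List ℕ), (∀ x ∈ st, x < i) → st.Nodup →
      ∀ p q, p ∈ mpairs kind w i st → q ∈ mpairs kind w i st →
        (p.1 = q.1 ∨ p.2 = q.2) → p = q := by
  induction w with
  | nil => intro i st _ _ p q hp _ _; simp [mpairs] at hp
  | cons a rest ih =>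
    intro i st hlt hnd p q hp hq hpq
    cases hk : kind a with
    | call =>
      simp only [mpairs, hk] at hp hq
      have hlt' : ∀ x ∈ i :: st, x < i + 1 := by
        intro x hx
        rcases List.mem_cons.mp hx with h | h
        · omega
        · exact Nat.lt_succ_of_lt (hlt x h)
      have hnd' : (i :: st).Nodup :=
        List.nodup_cons.mpr ⟨fun h => absurd (hlt i h) (by omega), hnd⟩
      exact ih (i + 1) (i :: st) hlt' hnd' p q hp hq hpq
    | intern =>
      simp only [mpairs, hk] at hp hq
      exact ih (i + 1) st (fun x hx => Nat.lt_succ_of_lt (hlt x hx)) hnd p q hp hq hpq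
    | ret =>
      cases st with
      | nil =>
        simp only [mpairs, hk] at hp hq
        exact ih (i + 1) [] (by simp) (by simp) p q hp hq hpq
      | cons d st' =>
        simp only [mpairs, hk] at hp hq
        have hlt' : ∀ x ∈ st', x < i + 1 :=
          fun x hx => Nat.lt_succ_of_lt (hlt x (List.mem_cons_of_mem _ hx))
        have hnd' : st'.Nodup := (List.nodup_cons.mp hnd).2
        have hd : d ∉ st' := (List.nodup_cons.mp hnd).1
        have aux : ∀ r ∈ mpairs kind rest (i + 1) st', d ≠ r.1 ∧ i ≠ r.2 := by
          intro r hr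
          obtain ⟨h1, _, h3, _⟩ := mpairs_bounds kind rest (i + 1) st' hlt' r hr
          constructor
          · rcases h1 with h | ⟨h, _⟩
            · exact fun e => hd (e ▸ h)
            · have := hlt d (by simp); omega
          · omega
        rcases List.mem_cons.mp hp with hp1 | hp1 <;> rcases List.mem_cons.mp hq with hq1 | hq1
        · rw [hp1, hq1]
        · exfalso
          obtain ⟨e1, e2⟩ := aux q hq1
          rcases hpq with h | h
          · exact e1 (by rw [← h, hp1])
          · exact e2 (by rw [← h, hp1])
        · exfalso
          obtain ⟨e1, e2⟩ := aux p hp1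
          rcases hpq with h | h
          · exact e1 (by rw [h, hq1])
          · exact e2 (by rw [h, hq1])
        · exact ih (i + 1) st' hlt' hnd' p q hp1 hq1 hpq

/-- The stack-based matching relation satisfies the three axioms of a
matching relation. -/
theorem stackMatch_is_matching {σ : Type*} (kind : σ → SymKind) (w : List σ) :
    -- (i) matched pairs are ordered
    (∀ i j, StackMatch kind w i j → i < j) ∧
    -- (ii) between any call `i` and later return `j` some `l` matches `i` or `j`
    (∀ i j, CallPos kind w i → RetPos kind w j → i < j →
      ∃ l, i ≤ l ∧ l ≤ j ∧ (StackMatch kind w i l ∨ StackMatch kind w l j)) ∧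
    -- (iii) every position participates in at most one matched pair
    (∀ i j i' j', StackMatch kind w i j → StackMatch kind w i' j' →
      (i = i' ∨ i = j' ∨ j = i' ∨ j = j') → i = i' ∧ j = j') := by
  have hempty : ∀ x ∈ ([] : List ℕ), x < 0 := by simp
  refine ⟨?_, ?_, ?_⟩
  · intro i j h
    exact (mpairs_bounds kind w 0 [] hempty (i, j) h).2.1
  · intro i j hc hr hij
    obtain ⟨l, h1, h2, h⟩ := mpairs_between kind w 0 [] i j hempty (by simp) (by omega) hij
      (by simpa [CallPos] using hc) (by simpa [RetPos] using hr)
    exact ⟨l, h1, h2, h⟩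
  · intro i j i' j' h1 h2 hdisj
    have cross : ∀ a b a' b', StackMatch kind w a b → StackMatch kind w a' b' → a ≠ b' := by
      intro a b a' b' ha hb
      obtain ⟨hA, _, _, c', hc', hck'⟩ := mpairs_bounds kind w 0 [] hempty (a', b') hb
      obtain ⟨hA2, _, _, _⟩ := mpairs_bounds kind w 0 [] hempty (a, b) ha
      rcases hA2 with h | ⟨_, c, hc, hck⟩
      · simp at h
      intro e
      rw [Nat.sub_zero] at hc hc'
      rw [e] at hc
      rw [hc] at hc'
      have : c = c' := by injection hc'
      rw [this, hck'] at hck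
      exact SymKind.noConfusion hck
    have uq := mpairs_unique kind w 0 [] hempty (by simp) (i, j) (i', j') h1 h2
    rcases hdisj with h | h | h | h
    · have := uq (Or.inl h); exact ⟨congrArg Prod.fst this, congrArg Prod.snd this⟩
    · exact absurd h (cross i j i' j' h1 h2)
    · exact absurd h.symm (cross i' j' i j h2 h1)
    · have := uq (Or.inr h); exact ⟨congrArg Prod.fst this, congrArg Prod.snd this⟩
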